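/- Let S = {v₁, …, vₙ} and let T be the path tree with edges vᵢv_{i+1} for 1 ≤ i < n, rooted at v₁ (so each vᵢ with i < n has the single child v_{i+1}). A Hamiltonian cycle on S conforms to T if and only if it is pyramidal: traversing the cycle starting from v₁ in a suitable direction, the indices of the visited vertices first strictly increase from 1 up to n and then strictly decrease back towards 1. -/

import Mathlib

/-- A rooted tree on a vertex type `V`, given by a parent function under which
every vertex reaches the root. -/
structure ParentTree (V : Type) where
  root : V
  parent : V → V
  parent_root : parent root = root
  reaches_root : ∀ v, ∃ k, parent^[k] v = root

namespace ParentTree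

variable {V : Type}

/-- The set `C(u)` of children of `u`. -/
def children (T : ParentTree V) (u : V) : Set V := {v | T.parent v = u ∧ v ≠ u}

/-- The set `T(u)` of descendants of `u` (including `u` itself). -/
def desc (T : ParentTree V) (u : V) : Set V := {b | ∃ k, T.parent^[k] b = u}

/-- For a set `U` of siblings, `T(U) = ⋃_{u ∈ U} T(u)`. -/
def descU (T : ParentTree V) (U : Set V) : Set V := ⋃ u ∈ U, T.desc u

end ParentTree

/-- The set of points occurring in a list. -/
def listSet {V : Type} (l : List V) : Set V := {x | x ∈ l}

/-- The weight of a Hamiltonian cycle given as a list: the sum of distances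
over cyclically consecutive pairs. -/
def cycleWeight {V X : Type} [MetricSpace X] (f : V → X) (h : List V) : ℝ :=
  ((h.zip (h.rotate 1)).map fun p => dist (f p.1) (f p.2)).sum

/-- A Hamiltonian cycle on the point set: a cyclic ordering of all points,
represented as a duplicate-free list containing every point. -/
def IsHamCycle {V : Type} (h : List V) : Prop := h.Nodup ∧ ∀ x : V, x ∈ h

/-- The set `A` forms a contiguous cyclic arc of the cycle `h`. -/
def IsCyclicArc {V : Type} (A : Set V) (h : List V) : Prop :=
  ∃ i : ℕ, listSet ((h.rotate i).take A.ncard) = A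

/-- A Hamiltonian cycle conforms to the rooted tree `T` if for every node `u`
the set `T(u)` of descendants of `u` forms a contiguous cyclic arc of the cycle. -/
def CycleConforms {V : Type} (T : ParentTree V) (h : List V) : Prop :=
  ∀ u : V, IsCyclicArc (T.desc u) h

/-- A Hamiltonian cycle on `{v₁, …, vₙ}` (indexed by `Fin n`) is pyramidal:
traversing the cycle starting from `v₁` in a suitable direction, the indices
first strictly increase and then strictly decrease. -/
def IsPyramidal {n : ℕ} (h : List (Fin n)) : Prop :=
  ∃ g : List (Fin n), (∃ i : ℕ, g = h.rotate i ∨ g = h.reverse.rotate i) ∧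
    (∃ x : Fin n, g.head? = some x ∧ (x : ℕ) = 0) ∧
    ∃ l₁ l₂ : List (Fin n), g = l₁ ++ l₂ ∧
      l₁.Chain' (· < ·) ∧ l₂.Chain' (fun a b => b < a)

section AuxLemmas

variable {V : Type}

lemma listSet_eq_coe [DecidableEq V] (l : List V) : listSet l = ↑l.toFinset := by
  ext x; simp [listSet]

lemma ncard_listSet [DecidableEq V] {l : List V} (h : l.Nodup) :
    (listSet l).ncard = l.length := by
  rw [listSet_eq_coe, Set.ncard_coe_finset, List.toFinset_card_of_nodup h]

lemma rotate_cancel (l : List V) (i : ℕ) : ∃ j, (l.rotate i).rotate j = l := by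
  rcases eq_or_ne l.length 0 with h0 | h0
  · rw [List.length_eq_zero_iff] at h0; subst h0; exact ⟨0, by simp⟩
  · refine ⟨l.length * (i / l.length + 1) - i, ?_⟩
    rw [List.rotate_rotate]
    have h1 : l.length * (i / l.length + 1) = l.length * (i / l.length) + l.length :=
      Nat.mul_succ _ _
    have h2 := Nat.div_add_mod i l.length
    have h3 := Nat.mod_lt i (Nat.pos_of_ne_zero h0)
    have hle : i ≤ l.length * (i / l.length + 1) := by omega
    rw [Nat.add_sub_cancel' hle]
    exact List.rotate_length_mul l _

lemma isCyclicArc_rotate_iff (A : Set V) (l : List V) (i : ℕ) :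
    IsCyclicArc A (l.rotate i) ↔ IsCyclicArc A l := by
  constructor
  · rintro ⟨j, hj⟩; exact ⟨i + j, by rwa [← List.rotate_rotate]⟩
  · rintro ⟨j, hj⟩
    obtain ⟨k, hk⟩ := rotate_cancel l i
    exact ⟨k + j, by rw [← List.rotate_rotate, hk]; exact hj⟩

lemma listSet_take_reverse (m : List V) (c : ℕ) :
    ∃ d, listSet (m.reverse.take c) = listSet ((m.rotate d).take c) := by
  rcases le_or_gt m.length c with hc | hc
  · refine ⟨0, ?_⟩
    rw [List.rotate_zero, List.take_of_length_le hc,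
        List.take_of_length_le (by simpa using hc)]
    ext x; simp [listSet]
  · refine ⟨m.length - c, ?_⟩
    rw [List.take_reverse]
    rw [List.rotate_eq_drop_append_take (by omega)]
    rw [List.take_append_of_le_length (by rw [List.length_drop]; omega)]
    rw [List.take_of_length_le (by rw [List.length_drop]; omega)]
    ext x; simp [listSet]

lemma isCyclicArc_reverse (A : Set V) (l : List V) :
    IsCyclicArc A l.reverse → IsCyclicArc A l := by
  rintro ⟨j, hj⟩
  rw [List.rotate_reverse] at hj
  obtain ⟨d, hd⟩ := listSet_take_reverse (l.rotate (l.length - j % l.length)) A.ncard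
  refine ⟨(l.length - j % l.length) + d, ?_⟩
  rw [← List.rotate_rotate, ← hd]
  exact hj

lemma mem_dropWhile_ge [LinearOrder V] (u : V) :
    ∀ l : List V, l.Pairwise (· < ·) →
      ∀ x ∈ l.dropWhile (fun y => decide (y < u)), u ≤ x := by
  intro l
  induction l with
  | nil => simp
  | cons a l ih =>
    intro hp x hx
    rw [List.pairwise_cons] at hp
    rw [List.dropWhile_cons] at hx
    by_cases hau : a < u
    · simp [hau] at hx
      exact ih hp.2 x hx
    · simp [hau] at hx
      rcases hx with rfl | hx
      · exact le_of_not_gt hau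
      · exact le_trans (le_of_not_gt hau) (le_of_lt (hp.1 x hx))

lemma mem_dropWhile_lt [LinearOrder V] (u : V) :
    ∀ l : List V, l.Pairwise (fun a b => b < a) →
      ∀ x ∈ l.dropWhile (fun y => decide (u ≤ y)), x < u := by
  intro l
  induction l with
  | nil => simp
  | cons a l ih =>
    intro hp x hx
    rw [List.pairwise_cons] at hp
    rw [List.dropWhile_cons] at hx
    by_cases hau : u ≤ a
    · simp [hau] at hx
      exact ih hp.2 x hx
    · simp [hau] at hx
      rcases hx with rfl | hx
      · exact lt_of_not_ge hau
      · exact lt_trans (hp.1 x hx) (lt_of_not_ge hau)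

lemma segment_arc [DecidableEq V] (A : Set V) {g : List V} (hg : g.Nodup)
    (p s d : List V) (hsplit : g = p ++ (s ++ d)) (hA : listSet s = A) :
    IsCyclicArc A g := by
  have hnd : s.Nodup := (((List.sublist_append_left s d).trans
    (List.sublist_append_right p _))).nodup (hsplit ▸ hg)
  have hcard : A.ncard = s.length := by rw [← hA, ncard_listSet hnd]
  refine ⟨p.length, ?_⟩
  rw [hcard, List.rotate_eq_drop_append_take (by rw [hsplit, List.length_append]; omega),
      hsplit, List.drop_left, List.append_assoc, List.take_left]
  exact hA

end AuxLemmas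

lemma desc_eq_Ici {n : ℕ} (hn : 1 ≤ n) (T : ParentTree (Fin n)) (hroot : (T.root : ℕ) = 0)
    (hpar : ∀ i j : Fin n, (j : ℕ) = (i : ℕ) + 1 → T.parent j = i) (u : Fin n) :
    T.desc u = Set.Ici u := by
  have hiter : ∀ (k : ℕ) (b : Fin n), ((T.parent^[k] b : Fin n) : ℕ) = (b : ℕ) - k := by
    intro k
    induction k with
    | zero => intro b; simp
    | succ k ihk =>
      intro b
      rw [Function.iterate_succ_apply']
      have hc : ((T.parent^[k] b : Fin n) : ℕ) = (b : ℕ) - k := ihk b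
      set c := T.parent^[k] b with hcdef
      rcases Nat.eq_zero_or_pos (c : ℕ) with h0 | hpos
      · have hcr : c = T.root := Fin.ext (by rw [h0, hroot])
        rw [hcr, T.parent_root, hroot]
        omega
      · obtain ⟨m, hm⟩ : ∃ m, (c : ℕ) = m + 1 := ⟨(c : ℕ) - 1, by omega⟩
        have hmlt : m < n := by have := c.isLt; omega
        have hp := hpar ⟨m, hmlt⟩ c (by rw [hm])
        rw [hp]
        simp only [Fin.val_mk]
        omega
  ext b
  simp only [ParentTree.desc, Set.mem_setOf_eq, Set.mem_Ici]
  constructor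
  · rintro ⟨k, hk⟩
    have := hiter k b
    rw [hk] at this
    rw [Fin.le_def]
    omega
  · intro hub
    rw [Fin.le_def] at hub
    refine ⟨(b : ℕ) - (u : ℕ), Fin.ext ?_⟩
    rw [hiter]
    omega


lemma pyramidal_segments {n : ℕ} (u : Fin n) {g l₁ l₂ : List (Fin n)}
    (hg : g = l₁ ++ l₂) (h₁ : l₁.Chain' (· < ·)) (h₂ : l₂.Chain' (fun a b => b < a))
    (hnd : g.Nodup) (hall : ∀ x, x ∈ g) :
    IsCyclicArc (Set.Ici u) g := by
  haveI : IsTrans (Fin n) (fun a b : Fin n => b < a) := ⟨fun a b c h1 h2 => lt_trans h2 h1⟩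
  have hp₁ : l₁.Pairwise (· < ·) := List.isChain_iff_pairwise.mp h₁
  have hp₂ : l₂.Pairwise (fun a b => b < a) := List.isChain_iff_pairwise.mp h₂
  have hl₁ : l₁ = l₁.takeWhile (fun y => decide (y < u)) ++ l₁.dropWhile (fun y => decide (y < u)) :=
    List.takeWhile_append_dropWhile.symm
  have hl₂ : l₂ = l₂.takeWhile (fun y => decide (u ≤ y)) ++ l₂.dropWhile (fun y => decide (u ≤ y)) :=
    List.takeWhile_append_dropWhile.symm
  apply segment_arc (Set.Ici u) hnd (l₁.takeWhile (fun y => decide (y < u)))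
    (l₁.dropWhile (fun y => decide (y < u)) ++ l₂.takeWhile (fun y => decide (u ≤ y)))
    (l₂.dropWhile (fun y => decide (u ≤ y)))
  · rw [hg]
    simp only [← List.append_assoc]
    rw [List.takeWhile_append_dropWhile, List.append_assoc, List.takeWhile_append_dropWhile]
  · ext x
    simp only [listSet, Set.mem_setOf_eq, Set.mem_Ici, List.mem_append]
    constructor
    · rintro (hx | hx)
      · exact mem_dropWhile_ge u l₁ hp₁ x hx
      · have h' := List.mem_takeWhile_imp hx
        simpa using h'
    · intro hux
      have hxg := hall x
      rw [hg] at hxg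
      nth_rewrite 1 [hl₁] at hxg
      nth_rewrite 1 [hl₂] at hxg
      simp only [List.mem_append] at hxg
      rcases hxg with (hx | hx) | (hx | hx)
      · have h' := List.mem_takeWhile_imp hx
        simp at h'
        exact absurd h' (not_lt.mpr hux)
      · exact Or.inl hx
      · exact Or.inr hx
      · exact absurd (mem_dropWhile_lt u l₂ hp₂ x hx) (not_lt.mpr hux)

lemma unimodal_of_segments {n : ℕ} :
    ∀ (N : ℕ) (t : List (Fin n)), t.length ≤ N → t.Nodup →
    (∀ u : Fin n, ∃ a m, listSet ((t.drop a).take m) = {x | x ∈ t ∧ u ≤ x}) →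
    ∃ l₁ l₂ : List (Fin n), t = l₁ ++ l₂ ∧ l₁.Chain' (· < ·) ∧
      l₂.Chain' (fun a b => b < a) := by
  intro N
  induction N with
  | zero =>
    intro t ht _ _
    rw [Nat.le_zero, List.length_eq_zero_iff] at ht
    exact ⟨[], [], by simp [ht], List.isChain_nil, List.isChain_nil⟩
  | succ N ih =>
    intro t htN hnd hseg
    by_cases hlen : t.length ≤ 1
    · rcases t with _ | ⟨a, _ | ⟨b, t⟩⟩
      · exact ⟨[], [], by simp, List.isChain_nil, List.isChain_nil⟩
      · exact ⟨[a], [], by simp, List.isChain_singleton a, List.isChain_nil⟩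
      · simp at hlen
    push_neg at hlen
    have hL : 2 ≤ t.length := hlen
    have htne : t ≠ [] := by intro hcon; rw [hcon] at hL; simp at hL
    have hFne : t.toFinset.Nonempty :=
      ⟨t.head htne, List.mem_toFinset.mpr (List.head_mem htne)⟩
    set mn := t.toFinset.min' hFne with hmn_def
    have hmn_mem : mn ∈ t := List.mem_toFinset.mp (t.toFinset.min'_mem hFne)
    have hmn_le : ∀ x ∈ t, mn ≤ x := fun x hx =>
      t.toFinset.min'_le x (List.mem_toFinset.mpr hx)
    have hcardF : t.toFinset.card = t.length := List.toFinset_card_of_nodup hnd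
    obtain ⟨y, hy_mem, hy_ne⟩ : ∃ y ∈ t.toFinset, y ≠ mn :=
      Finset.exists_mem_ne (by omega) mn
    have hmn_lt_y : mn < y := lt_of_le_of_ne (hmn_le y (List.mem_toFinset.mp hy_mem)) (Ne.symm hy_ne)
    have hulty : (mn : ℕ) + 1 ≤ (y : ℕ) := hmn_lt_y
    have hun : (mn : ℕ) + 1 < n := lt_of_le_of_lt hulty y.isLt
    set u : Fin n := ⟨(mn : ℕ) + 1, hun⟩ with hu_def
    have hu_le : ∀ x, x ∈ t → x ≠ mn → u ≤ x := by
      intro x hx hne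
      have h1 : mn < x := lt_of_le_of_ne (hmn_le x hx) (Ne.symm hne)
      have : (mn : ℕ) < (x : ℕ) := h1
      simp only [Fin.le_def, hu_def]
      omega
    have hset : {x : Fin n | x ∈ t ∧ u ≤ x} = {x | x ∈ t ∧ x ≠ mn} := by
      ext x
      simp only [Set.mem_setOf_eq]
      constructor
      · rintro ⟨hx, hux⟩
        refine ⟨hx, ?_⟩
        rintro rfl
        have : (mn : ℕ) + 1 ≤ (mn : ℕ) := hux
        omega
      · rintro ⟨hx, hne⟩
        exact ⟨hx, hu_le x hx hne⟩
    obtain ⟨a, m, hsegu⟩ := hseg u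
    rw [hset] at hsegu
    have hsegsub : ((t.drop a).take m).Sublist t :=
      (List.take_sublist _ _).trans (List.drop_sublist _ _)
    have hsegnd : ((t.drop a).take m).Nodup := hsegsub.nodup hnd
    have hcardset : {x : Fin n | x ∈ t ∧ x ≠ mn}.ncard = t.length - 1 := by
      have : {x : Fin n | x ∈ t ∧ x ≠ mn} = ↑(t.toFinset.erase mn) := by
        ext x; simp [and_comm]
      rw [this, Set.ncard_coe_finset, Finset.card_erase_of_mem (List.mem_toFinset.mpr hmn_mem),
        hcardF]
    have hseglen : ((t.drop a).take m).length = t.length - 1 := by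
      rw [← ncard_listSet hsegnd, hsegu, hcardset]
    rw [List.length_take, List.length_drop] at hseglen
    have ha1 : a ≤ 1 := by omega
    interval_cases a
    · -- a = 0 : minimum is at the end
      have hm : m = t.length - 1 := by omega
      rw [List.drop_zero, hm, ← List.dropLast_eq_take] at hsegu
      have htsplit : t.dropLast ++ [t.getLast htne] = t := List.dropLast_append_getLast htne
      have hnd2 : (t.dropLast ++ [t.getLast htne]).Nodup := by rw [htsplit]; exact hnd
      rw [List.nodup_append] at hnd2
      have hlast_notin : t.getLast htne ∉ t.dropLast := by
        intro hcon
        exact hnd2.2.2 _ hcon _ (List.mem_singleton_self _) rfl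
      have hlast_eq : t.getLast htne = mn := by
        by_contra hne
        have hmem : t.getLast htne ∈ {x : Fin n | x ∈ t ∧ x ≠ mn} :=
          ⟨List.getLast_mem htne, hne⟩
        rw [← hsegu] at hmem
        exact hlast_notin hmem
      have htt : t = t.dropLast ++ [mn] := by rw [← hlast_eq, htsplit]
      have hmn_notin : mn ∉ t.dropLast := hlast_eq ▸ hlast_notin
      -- transfer hypothesis to t.dropLast
      have hseg' : ∀ u' : Fin n, ∃ a' m',
          listSet ((t.dropLast.drop a').take m') = {x | x ∈ t.dropLast ∧ u' ≤ x} := by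
        intro u'
        by_cases hu' : u' ≤ mn
        · refine ⟨0, t.dropLast.length, ?_⟩
          rw [List.drop_zero, List.take_length]
          ext x
          simp only [listSet, Set.mem_setOf_eq]
          refine ⟨fun hx => ⟨hx, ?_⟩, fun hx => hx.1⟩
          exact le_trans hu' (hmn_le x (by rw [htt]; exact List.mem_append_left _ hx))
        · push_neg at hu'
          obtain ⟨a', m', h'⟩ := hseg u'
          have hS : {x : Fin n | x ∈ t ∧ u' ≤ x} = {x | x ∈ t.dropLast ∧ u' ≤ x} := by
            ext x
            simp only [Set.mem_setOf_eq]
            constructor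
            · rintro ⟨hx, hux⟩
              rw [htt, List.mem_append] at hx
              rcases hx with hx | hx
              · exact ⟨hx, hux⟩
              · rw [List.mem_singleton] at hx
                subst hx
                exact absurd hux (not_le.mpr hu')
            · rintro ⟨hx, hux⟩
              exact ⟨by rw [htt]; exact List.mem_append_left _ hx, hux⟩
          rw [hS] at h'
          have hmn_notinS : mn ∉ {x : Fin n | x ∈ t.dropLast ∧ u' ≤ x} :=
            fun hc => hmn_notin hc.1
          by_cases hm0 : m' = 0
          · refine ⟨0, 0, ?_⟩
            rw [← h', hm0]
            simp
          by_cases ha' : t.dropLast.length ≤ a'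
          · -- segment lives in the [mn] part or is empty
            have hd : t.drop a' = [mn].drop (a' - t.dropLast.length) := by
              nth_rewrite 1 [htt]
              rw [List.drop_append, List.drop_eq_nil_of_le ha', List.nil_append]
            rcases Nat.lt_or_ge (a' - t.dropLast.length) 1 with h1 | h1
            · exfalso
              have : a' - t.dropLast.length = 0 := by omega
              rw [hd, this, List.drop_zero] at h'
              have hmnmem : mn ∈ listSet (List.take m' [mn]) := by
                have : List.take m' [mn] = [mn] := List.take_of_length_le (by simp; omega)
                rw [this]; exact List.mem_singleton_self mn
              rw [h'] at hmnmem
              exact hmn_notinS hmnmem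
            · refine ⟨0, 0, ?_⟩
              have hnil : List.drop (a' - t.dropLast.length) [mn] = [] :=
                List.drop_eq_nil_of_le (by rw [List.length_singleton]; omega)
              rw [← h', hd, hnil]
              simp
          · push_neg at ha'
            have hd : t.drop a' = t.dropLast.drop a' ++ [mn] := by
              nth_rewrite 1 [htt]
              rw [List.drop_append,
                Nat.sub_eq_zero_of_le (le_of_lt ha'), List.drop_zero]
            by_cases hmw : m' ≤ (t.dropLast.drop a').length
            · refine ⟨a', m', ?_⟩
              rw [← h', hd, List.take_append_of_le_length hmw]
            · exfalso
              push_neg at hmw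
              have : (t.drop a').take m' = t.dropLast.drop a' ++
                  [mn].take (m' - (t.dropLast.drop a').length) := by
                rw [hd, List.take_append,
                  List.take_of_length_le (le_of_lt hmw)]
              have hmnmem : mn ∈ listSet ((t.drop a').take m') := by
                rw [this]
                apply List.mem_append_right
                have : [mn].take (m' - (t.dropLast.drop a').length) = [mn] :=
                  List.take_of_length_le (by rw [List.length_singleton]; omega)
                rw [this]; exact List.mem_singleton_self mn
              rw [h'] at hmnmem
              exact hmn_notinS hmnmem
      obtain ⟨l₁, l₂, hsp, hc₁, hc₂⟩ := ih t.dropLast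
        (by rw [List.length_dropLast]; omega) hnd2.1 hseg'
      refine ⟨l₁, l₂ ++ [mn], ?_, hc₁, ?_⟩
      · rw [htt, hsp, List.append_assoc]
      · unfold List.Chain'; rw [List.isChain_append]
        refine ⟨hc₂, List.isChain_singleton mn, ?_⟩
        intro x hx y hy
        rw [List.head?_singleton, Option.mem_some_iff] at hy
        subst hy
        have hx_mem : x ∈ t.dropLast := by
          rw [hsp]
          exact List.mem_append_right _ (List.mem_of_mem_getLast? hx)
        have hx_ne : x ≠ mn := fun hc => hmn_notin (hc ▸ hx_mem)
        exact lt_of_le_of_ne (hmn_le x (by rw [htt]; exact List.mem_append_left _ hx_mem))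
          (Ne.symm hx_ne)
    · -- a = 1 : minimum is at the front
      have hm1 : t.length - 1 ≤ m := by omega
      rw [List.take_of_length_le (by rw [List.length_drop]; omega), List.drop_one] at hsegu
      have htcons : t = t.head htne :: t.tail := (List.cons_head_tail htne).symm
      have hndc : (t.head htne :: t.tail).Nodup := htcons ▸ hnd
      have hnd' : t.tail.Nodup := hndc.of_cons
      have hhd_notin : t.head htne ∉ t.tail := (List.nodup_cons.mp hndc).1
      have hhd_eq : t.head htne = mn := by
        by_contra hne
        have hmem : t.head htne ∈ {x : Fin n | x ∈ t ∧ x ≠ mn} := ⟨List.head_mem htne, hne⟩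
        rw [← hsegu] at hmem
        exact hhd_notin hmem
      have htt : t = mn :: t.tail := by rw [← hhd_eq]; exact htcons
      have hmn_notin : mn ∉ t.tail := hhd_eq ▸ hhd_notin
      have hseg' : ∀ u' : Fin n, ∃ a' m',
          listSet ((t.tail.drop a').take m') = {x | x ∈ t.tail ∧ u' ≤ x} := by
        intro u'
        by_cases hu' : u' ≤ mn
        · refine ⟨0, t.tail.length, ?_⟩
          rw [List.drop_zero, List.take_length]
          ext x
          simp only [listSet, Set.mem_setOf_eq]
          refine ⟨fun hx => ⟨hx, ?_⟩, fun hx => hx.1⟩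
          exact le_trans hu' (hmn_le x (by rw [htt]; exact List.mem_cons_of_mem _ hx))
        · push_neg at hu'
          obtain ⟨a', m', h'⟩ := hseg u'
          have hS : {x : Fin n | x ∈ t ∧ u' ≤ x} = {x | x ∈ t.tail ∧ u' ≤ x} := by
            ext x
            simp only [Set.mem_setOf_eq]
            constructor
            · rintro ⟨hx, hux⟩
              rw [htt, List.mem_cons] at hx
              rcases hx with rfl | hx
              · exact absurd hux (not_le.mpr hu')
              · exact ⟨hx, hux⟩
            · rintro ⟨hx, hux⟩
              exact ⟨by rw [htt]; exact List.mem_cons_of_mem _ hx, hux⟩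
          rw [hS] at h'
          have hmn_notinS : mn ∉ {x : Fin n | x ∈ t.tail ∧ u' ≤ x} :=
            fun hc => hmn_notin hc.1
          rcases Nat.eq_zero_or_pos a' with rfl | ha'
          · by_cases hm0 : m' = 0
            · refine ⟨0, 0, ?_⟩
              rw [← h', hm0]; simp
            · exfalso
              have hmnmem : mn ∈ listSet ((t.drop 0).take m') := by
                rw [List.drop_zero]
                have hht : t.take m' = mn :: t.tail.take (m' - 1) := by
                  obtain ⟨k, rfl⟩ : ∃ k, m' = k + 1 := ⟨m' - 1, by omega⟩
                  rw [htt]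
                  simp [List.take_succ_cons]
                rw [hht]
                exact List.mem_cons_self
              rw [h'] at hmnmem
              exact hmn_notinS hmnmem
          · refine ⟨a' - 1, m', ?_⟩
            rw [← h']
            obtain ⟨k, rfl⟩ : ∃ k, a' = k + 1 := ⟨a' - 1, by omega⟩
            rw [htt]
            simp [List.drop_succ_cons]
      obtain ⟨l₁, l₂, hsp, hc₁, hc₂⟩ := ih t.tail (by rw [List.length_tail]; omega) hnd' hseg'
      refine ⟨mn :: l₁, l₂, by rw [htt, hsp]; rfl, ?_, hc₂⟩
      unfold List.Chain'; rw [List.isChain_cons]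
      refine ⟨?_, hc₁⟩
      intro y hy
      have hy_mem : y ∈ t.tail := by
        rw [hsp]
        exact List.mem_append_left _ (List.mem_of_mem_head? hy)
      have hy_ne : y ≠ mn := fun hc => hmn_notin (hc ▸ hy_mem)
      exact lt_of_le_of_ne (hmn_le y (by rw [htt]; exact List.mem_cons_of_mem _ hy_mem))
        (Ne.symm hy_ne)


/-- For the path tree (each `vᵢ`, `i < n`, has the single child `v_{i+1}`,
rooted at `v₁`), a Hamiltonian cycle conforms to the tree if and only if it is
pyramidal. -/
theorem stmt13 {n : ℕ} {X : Type} [MetricSpace X] (hn : 3 ≤ n)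
    (f : Fin n → X) (hf : Function.Injective f)
    (T : ParentTree (Fin n)) (hroot : (T.root : ℕ) = 0)
    (hpar : ∀ i j : Fin n, (j : ℕ) = (i : ℕ) + 1 → T.parent j = i)
    (h : List (Fin n)) (hh : IsHamCycle h) :
    CycleConforms T h ↔ IsPyramidal h := by
  have hdesc : ∀ u : Fin n, T.desc u = Set.Ici u :=
    desc_eq_Ici (by omega) T hroot hpar
  constructor
  · intro hc
    have hlen : h.length = n := by
      have h1 : h.toFinset = Finset.univ := Finset.eq_univ_iff_forall.mpr
        (fun x => List.mem_toFinset.mpr (hh.2 x))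
      have h2 := List.toFinset_card_of_nodup hh.1
      rw [h1, Finset.card_univ, Fintype.card_fin] at h2
      omega
    have hzlt : 0 < n := by omega
    set z : Fin n := ⟨0, hzlt⟩ with hz
    have hi : h.idxOf z < h.length := List.idxOf_lt_length_iff.mpr (hh.2 z)
    set i := h.idxOf z with hidef
    set g := h.rotate i with hgdef
    have hglen : g.length = n := by rw [hgdef, List.length_rotate, hlen]
    have hgnd : g.Nodup := List.nodup_rotate.mpr hh.1
    have hgall : ∀ x, x ∈ g := fun x => List.mem_rotate.mpr (hh.2 x)
    have hgcons : g = z :: (h.drop (i + 1) ++ h.take i) := by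
      rw [hgdef, List.rotate_eq_drop_append_take hi.le, List.drop_eq_getElem_cons hi,
        List.getElem_idxOf hi]
      rfl
    set tl := h.drop (i + 1) ++ h.take i with htl
    have harc : ∀ u : Fin n, IsCyclicArc (Set.Ici u) g := by
      intro u
      have h1 := hc u
      rw [hdesc u] at h1
      exact (isCyclicArc_rotate_iff _ h i).mpr h1
    have hcval : ∀ u : Fin n, (Set.Ici u).ncard = n - (u : ℕ) := by
      intro u
      rw [← Finset.coe_Ici, Set.ncard_coe_finset, Fin.card_Ici]
    have hseg : ∀ u : Fin n, ∃ a m,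
        listSet ((tl.drop a).take m) = {x | x ∈ tl ∧ u ≤ x} := by
      intro u
      by_cases hu0 : (u : ℕ) = 0
      · refine ⟨0, tl.length, ?_⟩
        rw [List.drop_zero, List.take_length]
        ext x
        simp only [listSet, Set.mem_setOf_eq]
        exact ⟨fun hx => ⟨hx, by rw [Fin.le_def, hu0]; omega⟩, fun hx => hx.1⟩
      · have hz_not : ¬ u ≤ z := by
          rw [Fin.le_def, hz]
          simp only [Fin.val_mk]
          omega
        have hzmem : z ∉ Set.Ici u := hz_not
        obtain ⟨j, hj⟩ := harc u
        set c := (Set.Ici u).ncard with hcdef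
        have hc1 : 1 ≤ c := by
          rw [hcdef, hcval]
          have := u.isLt
          omega
        obtain ⟨j', hj'def⟩ : ∃ j', j' = j % n := ⟨j % n, rfl⟩
        have hj'lt : j' < n := by rw [hj'def]; exact Nat.mod_lt _ (by omega)
        have hjr : g.rotate j' = g.rotate j := by
          have hrm := List.rotate_mod g j
          rw [hglen] at hrm
          rw [hj'def]
          exact hrm
        rw [← hjr] at hj
        have hj0 : j' ≠ 0 := by
          rintro hj'0
          rw [hj'0, List.rotate_zero] at hj
          apply hzmem
          rw [← hj]
          rw [hgcons]
          obtain ⟨c', hc'⟩ : ∃ c', c = c' + 1 := ⟨c - 1, by omega⟩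
          rw [hc', List.take_succ_cons]
          exact List.mem_cons_self
        have hjc : j' + c ≤ n := by
          by_contra hcon
          push_neg at hcon
          apply hzmem
          rw [← hj]
          rw [List.rotate_eq_drop_append_take (by omega : j' ≤ g.length)]
          rw [List.take_append]
          apply List.mem_append_right
          have hdl : (g.drop j').length = n - j' := by rw [List.length_drop, hglen]
          rw [hdl, List.take_take]
          obtain ⟨q, hq⟩ : ∃ q, min (c - (n - j')) j' = q + 1 :=
            ⟨min (c - (n - j')) j' - 1, by omega⟩
          rw [hq, hgcons, List.take_succ_cons]
          exact List.mem_cons_self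
        refine ⟨j' - 1, c, ?_⟩
        have hdrop : g.drop j' = tl.drop (j' - 1) := by
          rw [hgcons]
          obtain ⟨q, hq⟩ : ∃ q, j' = q + 1 := ⟨j' - 1, by omega⟩
          rw [hq]
          simp [List.drop_succ_cons]
        have htake : (g.rotate j').take c = (tl.drop (j' - 1)).take c := by
          rw [List.rotate_eq_drop_append_take (by omega : j' ≤ g.length),
            List.take_append_of_le_length (by rw [List.length_drop, hglen]; omega), hdrop]
        rw [htake] at hj
        rw [hj]
        ext x
        simp only [Set.mem_Ici, Set.mem_setOf_eq]
        constructor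
        · intro hx
          refine ⟨?_, hx⟩
          have hxg := hgall x
          rw [hgcons, List.mem_cons] at hxg
          rcases hxg with rfl | hmem
          · exact absurd hx hz_not
          · exact hmem
        · exact fun hx => hx.2
    have htlnd : tl.Nodup := by
      have h1 := hgnd
      rw [hgcons] at h1
      exact h1.of_cons
    obtain ⟨l₁, l₂, hsp, hch₁, hch₂⟩ := unimodal_of_segments tl.length tl le_rfl htlnd hseg
    refine ⟨g, ⟨i, Or.inl hgdef⟩, ⟨z, by simp [hgcons], rfl⟩, z :: l₁, l₂, ?_, ?_, hch₂⟩
    · rw [hgcons, hsp]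
      rfl
    · unfold List.Chain'; rw [List.isChain_cons]
      refine ⟨?_, hch₁⟩
      intro y hy
      have hy_mem : y ∈ tl := hsp ▸ List.mem_append_left _ (List.mem_of_mem_head? hy)
      have hy_ne : y ≠ z := by
        intro hcon
        have h1 := hgnd
        rw [hgcons, List.nodup_cons] at h1
        exact h1.1 (hcon ▸ hy_mem)
      have hy_ne' : (y : ℕ) ≠ 0 := by
        intro hcon
        exact hy_ne (Fin.ext (by rw [hcon]))
      rw [Fin.lt_def, hz]
      simp only [Fin.val_mk]
      omega
  · rintro ⟨g, ⟨i, hgi⟩, -, l₁, l₂, hgsplit, c₁, c₂⟩ u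
    rw [hdesc u]
    have hgprops : g.Nodup ∧ ∀ x, x ∈ g := by
      rcases hgi with rfl | rfl
      · exact ⟨List.nodup_rotate.mpr hh.1, fun x => List.mem_rotate.mpr (hh.2 x)⟩
      · exact ⟨List.nodup_rotate.mpr (List.nodup_reverse.mpr hh.1),
          fun x => List.mem_rotate.mpr (List.mem_reverse.mpr (hh.2 x))⟩
    have harc : IsCyclicArc (Set.Ici u) g :=
      pyramidal_segments u hgsplit c₁ c₂ hgprops.1 hgprops.2
    rcases hgi with rfl | rfl
    · exact (isCyclicArc_rotate_iff _ h i).mp harc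
    · exact isCyclicArc_reverse _ h ((isCyclicArc_rotate_iff _ h.reverse i).mp harc)
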